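/- arXiv:1003.5501 — 6 statements merged into one kernel-verified Lean document; each statement's English description precedes it below -/
import Mathlib

section
/- For every real ν, every smooth function f : ℂ → ℂ, and every z ∈ ℂ with 1 + κ|z|² > 0, one has (∇_{ν+κ}(∇*_{ν+κ} f))(z) = (L_κ^ν f)(z) − ν f(z). -/
open Complex MeasureTheory Filter

/-- Wirtinger derivative ∂f/∂z = (1/2)(∂f/∂x − i ∂f/∂y). -/
noncomputable def wderiv (f : ℂ → ℂ) (z : ℂ) : ℂ :=
  (fderiv ℝ f z 1 - Complex.I * fderiv ℝ f z Complex.I) / 2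

/-- Anti-holomorphic Wirtinger derivative ∂f/∂z̄ = (1/2)(∂f/∂x + i ∂f/∂y). -/
noncomputable def wderivBar (f : ℂ → ℂ) (z : ℂ) : ℂ :=
  (fderiv ℝ f z 1 + Complex.I * fderiv ℝ f z Complex.I) / 2

/-- Twisted Laplacian L_κ^ν. -/
noncomputable def twistedLap (κ ν : ℝ) (f : ℂ → ℂ) (z : ℂ) : ℂ :=
  -(((1 + κ * Complex.normSq z : ℝ) : ℂ) ^ 2 * wderiv (wderivBar f) z
    + (ν : ℂ) * ((1 + κ * Complex.normSq z : ℝ) : ℂ) *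
        (z * wderiv f z - (starRingEnd ℂ) z * wderivBar f z)
    - (ν : ℂ) ^ 2 * ((Complex.normSq z : ℝ) : ℂ) * f z)

/-- (∇_α f)(z) = −(1+κ|z|²) ∂f/∂z + α z̄ f(z). -/
noncomputable def nabla (κ α : ℝ) (f : ℂ → ℂ) (z : ℂ) : ℂ :=
  -((1 + κ * Complex.normSq z : ℝ) : ℂ) * wderiv f z + (α : ℂ) * (starRingEnd ℂ) z * f z

/-- (∇*_α f)(z) = (1+κ|z|²) ∂f/∂z̄ + (α−κ) z f(z). -/
noncomputable def nablaStar (κ α : ℝ) (f : ℂ → ℂ) (z : ℂ) : ℂ :=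
  ((1 + κ * Complex.normSq z : ℝ) : ℂ) * wderivBar f z + ((α - κ : ℝ) : ℂ) * z * f z

/-- ∇_{ν+κ} ∘ ∇_{ν+2κ} ∘ ⋯ ∘ ∇_{ν+mκ} (the identity when m = 0). -/
noncomputable def nablaChain (κ : ℝ) : ℕ → ℝ → (ℂ → ℂ) → (ℂ → ℂ)
  | 0, _, f => f
  | m + 1, ν, f => nabla κ (ν + κ) (nablaChain κ m (ν + κ) f)

/-- (D g)(z) = (1+κ|z|²)² ∂g/∂z. -/
noncomputable def Dop (κ : ℝ) (g : ℂ → ℂ) (z : ℂ) : ℂ :=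
  ((1 + κ * Complex.normSq z : ℝ) : ℂ) ^ 2 * wderiv g z

/-- Generalized binomial coefficient C(r,k) for real r. -/
noncomputable def genBinom (r : ℝ) (k : ℕ) : ℝ :=
  (∏ i ∈ Finset.range k, (r - i)) / (Nat.factorial k)

/-- Jacobi polynomial P_j^{(a,b)}(x) with real parameters a, b. -/
noncomputable def jacobiP (a b : ℝ) (j : ℕ) (x : ℝ) : ℝ :=
  ∑ s ∈ Finset.range (j + 1),
    genBinom ((j : ℝ) + a) (j - s) * genBinom ((j : ℝ) + b) s *
      ((x - 1) / 2) ^ s * ((x + 1) / 2) ^ (j - s)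

/-- Pochhammer symbol (a)_n = a(a+1)⋯(a+n−1). -/
noncomputable def risingFactorial (a : ℝ) (n : ℕ) : ℝ :=
  ∏ i ∈ Finset.range n, (a + i)

lemma wderiv_mul {f g : ℂ → ℂ} {z : ℂ} (hf : DifferentiableAt ℝ f z)
    (hg : DifferentiableAt ℝ g z) :
    wderiv (fun w => f w * g w) z = wderiv f z * g z + f z * wderiv g z := by
  unfold wderiv
  rw [fderiv_fun_mul hf hg]
  simp only [ContinuousLinearMap.add_apply, ContinuousLinearMap.smul_apply, smul_eq_mul]
  ring

lemma wderiv_add {f g : ℂ → ℂ} {z : ℂ} (hf : DifferentiableAt ℝ f z)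
    (hg : DifferentiableAt ℝ g z) :
    wderiv (fun w => f w + g w) z = wderiv f z + wderiv g z := by
  unfold wderiv
  rw [fderiv_fun_add hf hg]
  simp only [ContinuousLinearMap.add_apply]
  ring

lemma wderiv_const (c : ℂ) (z : ℂ) : wderiv (fun _ => c) z = 0 := by
  unfold wderiv; rw [fderiv_fun_const]; simp

lemma wderiv_id (z : ℂ) : wderiv (fun w => w) z = 1 := by
  unfold wderiv
  rw [fderiv_id']
  simp [Complex.ext_iff]

lemma diffAt_conj (z : ℂ) : DifferentiableAt ℝ (fun w => (starRingEnd ℂ) w) z :=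
  Complex.conjCLE.toContinuousLinearMap.differentiableAt

lemma fderiv_conj (z : ℂ) : fderiv ℝ (fun w => (starRingEnd ℂ) w) z
    = Complex.conjCLE.toContinuousLinearMap :=
  (Complex.conjCLE.toContinuousLinearMap.hasFDerivAt).fderiv

lemma wderiv_conj (z : ℂ) : wderiv (fun w => (starRingEnd ℂ) w) z = 0 := by
  unfold wderiv
  rw [fderiv_conj]
  simp

lemma contDiff_wderivBar {f : ℂ → ℂ} (hf : ContDiff ℝ (⊤ : ℕ∞) f) :
    ContDiff ℝ (⊤ : ℕ∞) (wderivBar f) := by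
  have h : ContDiff ℝ (⊤ : ℕ∞) (fun z => fderiv ℝ f z) :=
    hf.fderiv_right (by exact_mod_cast le_top)
  have h1 : ContDiff ℝ (⊤ : ℕ∞) (fun z => fderiv ℝ f z 1) :=
    h.clm_apply contDiff_const
  have h2 : ContDiff ℝ (⊤ : ℕ∞) (fun z => fderiv ℝ f z Complex.I) :=
    h.clm_apply contDiff_const
  unfold wderivBar
  exact ((h1.add (contDiff_const.mul h2)).div_const 2)

theorem stmt0 (κ ν : ℝ) (f : ℂ → ℂ) (hf : ContDiff ℝ (⊤ : ℕ∞) f)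
    (z : ℂ) (hz : 0 < 1 + κ * Complex.normSq z) :
    nabla κ (ν + κ) (nablaStar κ (ν + κ) f) z = twistedLap κ ν f z - (ν : ℂ) * f z := by
  have df : DifferentiableAt ℝ f z := (hf.differentiable (by simp)).differentiableAt
  have dB : DifferentiableAt ℝ (wderivBar f) z :=
    ((contDiff_wderivBar hf).differentiable (by simp)).differentiableAt
  have dconj : DifferentiableAt ℝ (fun w => (starRingEnd ℂ) w) z := diffAt_conj z
  have did : DifferentiableAt ℝ (fun w : ℂ => w) z := differentiableAt_fun_id
  -- the weight function g
  set g : ℂ → ℂ := fun w => 1 + (κ : ℂ) * (w * (starRingEnd ℂ) w) with hg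
  have hgc : ∀ w : ℂ, ((1 + κ * Complex.normSq w : ℝ) : ℂ) = g w := by
    intro w
    simp only [hg]
    push_cast
    rw [Complex.mul_conj]
  have dzc : DifferentiableAt ℝ (fun w : ℂ => w * (starRingEnd ℂ) w) z := did.mul dconj
  have dg : DifferentiableAt ℝ g z := by
    apply DifferentiableAt.add
    · exact differentiableAt_const 1
    · exact (differentiableAt_const _).mul dzc
  have wzc : wderiv (fun w : ℂ => w * (starRingEnd ℂ) w) z = (starRingEnd ℂ) z := by
    rw [wderiv_mul did dconj, wderiv_id, wderiv_conj]; ring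
  have wg : wderiv g z = (κ : ℂ) * (starRingEnd ℂ) z := by
    simp only [hg]
    rw [wderiv_add (differentiableAt_const 1) ((differentiableAt_const _).fun_mul dzc),
      wderiv_const, wderiv_mul (differentiableAt_const _) dzc, wderiv_const, wzc]
    ring
  -- decompose nablaStar
  have hns : nablaStar κ (ν + κ) f = fun w =>
      g w * wderivBar f w + ((ν : ℂ) * w) * f w := by
    funext w
    rw [nablaStar, hgc w]
    push_cast
    ring
  have dcid : DifferentiableAt ℝ (fun w : ℂ => (ν : ℂ) * w) z :=
    (differentiableAt_const _).mul did
  have wcid : wderiv (fun w : ℂ => (ν : ℂ) * w) z = (ν : ℂ) := by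
    rw [wderiv_mul (differentiableAt_const _) did, wderiv_const, wderiv_id]; ring
  have key : wderiv (nablaStar κ (ν + κ) f) z
      = (κ : ℂ) * (starRingEnd ℂ) z * wderivBar f z + g z * wderiv (wderivBar f) z
        + (ν : ℂ) * f z + (ν : ℂ) * z * wderiv f z := by
    rw [hns, wderiv_add (dg.fun_mul dB) (dcid.fun_mul df), wderiv_mul dg dB, wderiv_mul dcid df,
      wg, wcid]
    ring
  have hnsz : nablaStar κ (ν + κ) f z = g z * wderivBar f z + (ν : ℂ) * z * f z := by
    rw [nablaStar, hgc z]; push_cast; ring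
  rw [nabla, key, hnsz, twistedLap, hgc z, ← Complex.mul_conj]
  push_cast
  simp only [hg]
  ring
end

section
/- For every real ν, every smooth function f : ℂ → ℂ, and every z ∈ ℂ with 1 + κ|z|² > 0, one has (∇*_{ν+κ}(∇_{ν+κ} f))(z) = (L_κ^{ν+κ} f)(z) + (ν+κ) f(z). -/
open Complex MeasureTheory Filter

theorem stmt1 (κ ν : ℝ) (f : ℂ → ℂ) (hf : ContDiff ℝ (⊤ : ℕ∞) f)
    (z : ℂ) (hz : 0 < 1 + κ * Complex.normSq z) :
    nablaStar κ (ν + κ) (nabla κ (ν + κ) f) z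
      = twistedLap κ (ν + κ) f z + ((ν + κ : ℝ) : ℂ) * f z := by
  have hf1 : Differentiable ℝ f := hf.differentiable (by simp)
  have hf' : ContDiff ℝ (⊤ : ℕ∞) (fderiv ℝ f) := hf.fderiv_right (mod_cast le_top)
  have hsymm := (hf.contDiffAt (x := z)).isSymmSndFDerivAt
    (by rw [minSmoothness_of_isRCLikeNormedField]; exact WithTop.coe_le_coe.mpr le_top)
  have hL : HasFDerivAt (fderiv ℝ f) (fderiv ℝ (fderiv ℝ f) z) z :=
    ((hf'.differentiable (by simp)) z).hasFDerivAt
  have happ : ∀ u : ℂ, HasFDerivAt (fun w => fderiv ℝ f w u)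
      ((fderiv ℝ f z).comp 0 + (fderiv ℝ (fderiv ℝ f) z).flip u) z :=
    fun u => hL.clm_apply (hasFDerivAt_const u z)
  have hW : HasFDerivAt (wderiv f)
      (((2:ℂ)⁻¹) • (((fderiv ℝ f z).comp 0 + (fderiv ℝ (fderiv ℝ f) z).flip 1)
        - Complex.I • ((fderiv ℝ f z).comp 0 + (fderiv ℝ (fderiv ℝ f) z).flip Complex.I))) z :=
    ((happ 1).sub ((happ Complex.I).const_mul Complex.I)).mul_const ((2:ℂ)⁻¹)
  have hWb : HasFDerivAt (wderivBar f)
      (((2:ℂ)⁻¹) • (((fderiv ℝ f z).comp 0 + (fderiv ℝ (fderiv ℝ f) z).flip 1)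
        + Complex.I • ((fderiv ℝ f z).comp 0 + (fderiv ℝ (fderiv ℝ f) z).flip Complex.I))) z :=
    ((happ 1).add ((happ Complex.I).const_mul Complex.I)).mul_const ((2:ℂ)⁻¹)
  have hconj : HasFDerivAt (fun w : ℂ => (starRingEnd ℂ) w)
      (Complex.conjCLE : ℂ →L[ℝ] ℂ) z := Complex.conjCLE.hasFDerivAt
  have hfz : HasFDerivAt f (fderiv ℝ f z) z := (hf1 z).hasFDerivAt
  -- rewrite nabla without normSq inside
  have hnab_eq : nabla κ (ν + κ) f = fun w =>
      -(1 + (κ:ℂ) * (w * (starRingEnd ℂ) w)) * wderiv f w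
        + (((ν + κ : ℝ)):ℂ) * (starRingEnd ℂ) w * f w := by
    funext w
    simp only [nabla, Complex.mul_conj]
    push_cast
    ring
  have hC : HasFDerivAt (fun w : ℂ => 1 + (κ:ℂ) * (w * (starRingEnd ℂ) w)) _ z :=
    (((hasFDerivAt_id z).mul hconj).const_mul (κ:ℂ)).const_add 1
  have hg : HasFDerivAt (fun w =>
      -(1 + (κ:ℂ) * (w * (starRingEnd ℂ) w)) * wderiv f w
        + (((ν + κ : ℝ)):ℂ) * (starRingEnd ℂ) w * f w) _ z :=
    (hC.neg.mul hW).add ((hconj.const_mul (((ν + κ : ℝ)):ℂ)).mul hfz)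
  simp only [nablaStar, twistedLap, hnab_eq, wderivBar]
  rw [hg.fderiv]
  simp only [wderiv]
  rw [hWb.fderiv]
  simp only [ContinuousLinearMap.add_apply, ContinuousLinearMap.sub_apply,
    ContinuousLinearMap.smul_apply, ContinuousLinearMap.comp_apply,
    ContinuousLinearMap.flip_apply, ContinuousLinearMap.zero_apply,
    ContinuousLinearMap.coe_smul', Pi.smul_apply, ContinuousLinearMap.neg_apply,
    ContinuousLinearMap.id_apply, ContinuousLinearEquiv.coe_coe, Complex.conjCLE_apply,
    map_one, Complex.conj_I, map_zero, smul_eq_mul, mul_zero, zero_add, add_zero,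
    ContinuousLinearMap.coe_add', Pi.add_apply, ContinuousLinearMap.coe_sub', Pi.sub_apply, Pi.neg_apply]
  have hs : (fderiv ℝ (fderiv ℝ f) z) 1 Complex.I = (fderiv ℝ (fderiv ℝ f) z) Complex.I 1 :=
    hsymm 1 Complex.I
  rw [hs]
  push_cast
  simp only [← Complex.mul_conj, id_eq]
  ring_nf
  simp only [Complex.I_sq, show Complex.I ^ 3 = -Complex.I by
    rw [pow_succ, Complex.I_sq]; ring]
  ring
end

section
/- Assume κ ≠ 0 and let ν be real and m ≥ 1 an integer. For every function f smooth on Ω = {z ∈ ℂ : 1 + κ|z|² > 0} and every z ∈ Ω, (∇_{ν+κ} ∘ ∇_{ν+2κ} ∘ ⋯ ∘ ∇_{ν+mκ}) f (z) = (−1)^m (1+κ|z|²)^{ν/κ} · D^m [w ↦ (1+κ|w|²)^{−(ν/κ + m)} f(w)](z), where D denotes the first-order operator (D g)(w) = (1+κ|w|²)² (∂g/∂w)(w) and D^m its m-fold iterate. -/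
open Complex MeasureTheory Filter

/- ### Auxiliary lemmas -/

lemma isOpen_Omega (κ : ℝ) : IsOpen {z : ℂ | 0 < 1 + κ * Complex.normSq z} :=
  isOpen_lt continuous_const (continuous_const.add (continuous_const.mul Complex.continuous_normSq))

lemma contDiff_q (κ : ℝ) : ContDiff ℝ (⊤ : ℕ∞) (fun w : ℂ => 1 + κ * Complex.normSq w) := by
  have hre : ContDiff ℝ (⊤ : ℕ∞) fun w : ℂ => w.re := Complex.reCLM.contDiff
  have him : ContDiff ℝ (⊤ : ℕ∞) fun w : ℂ => w.im := Complex.imCLM.contDiff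
  simp only [Complex.normSq_apply]
  exact contDiff_const.add (contDiff_const.mul ((hre.mul hre).add (him.mul him)))

lemma contDiffOn_P (κ p : ℝ) :
    ContDiffOn ℝ (⊤ : ℕ∞) (fun w : ℂ => (((1 + κ * Complex.normSq w) ^ p : ℝ) : ℂ))
      {z : ℂ | 0 < 1 + κ * Complex.normSq z} := by
  apply Complex.ofRealCLM.contDiff.comp_contDiffOn
  intro x hx
  exact ((contDiff_q κ).contDiffAt.contDiffWithinAt).rpow_const_of_ne (ne_of_gt hx)

lemma hasFDerivAt_P (κ p : ℝ) (z : ℂ) (hz : 0 < 1 + κ * Complex.normSq z) :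
    DifferentiableAt ℝ (fun w : ℂ => (((1 + κ * Complex.normSq w) ^ p : ℝ) : ℂ)) z ∧
    wderiv (fun w : ℂ => (((1 + κ * Complex.normSq w) ^ p : ℝ) : ℂ)) z
      = ((p * (1 + κ * Complex.normSq z) ^ (p - 1) * κ : ℝ) : ℂ) * (starRingEnd ℂ) z := by
  have h0 : HasFDerivAt (fun w : ℂ => Complex.normSq w)
      ((z.re • Complex.reCLM + z.re • Complex.reCLM)
        + (z.im • Complex.imCLM + z.im • Complex.imCLM)) z := by
    have := ((Complex.reCLM.hasFDerivAt (x := z)).mul (Complex.reCLM.hasFDerivAt)).add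
      ((Complex.imCLM.hasFDerivAt (x := z)).mul (Complex.imCLM.hasFDerivAt))
    refine HasFDerivAt.congr_of_eventuallyEq this (Filter.Eventually.of_forall fun w => ?_)
    simp [Complex.normSq_apply]
  have h1 : HasFDerivAt (fun w : ℂ => 1 + κ * Complex.normSq w)
      (κ • ((z.re • Complex.reCLM + z.re • Complex.reCLM)
        + (z.im • Complex.imCLM + z.im • Complex.imCLM))) z :=
    (h0.const_mul κ).const_add 1
  have h2 := h1.rpow_const (p := p) (Or.inl (ne_of_gt hz))
  have h3 := Complex.ofRealCLM.hasFDerivAt.comp z h2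
  constructor
  · exact h3.differentiableAt
  · simp only [Function.comp_def, Complex.ofRealCLM_apply] at h3
    rw [wderiv, h3.fderiv]
    have hconj : (starRingEnd ℂ) z = (z.re : ℂ) - (z.im : ℂ) * Complex.I := by
      apply Complex.ext <;> simp
    simp [ContinuousLinearMap.comp_apply, ContinuousLinearMap.smul_apply,
      ContinuousLinearMap.add_apply, Complex.ofRealCLM_apply, smul_eq_mul]
    rw [hconj]
    ring

lemma wderiv_congr {f g : ℂ → ℂ} {z : ℂ} (h : f =ᶠ[nhds z] g) : wderiv f z = wderiv g z := by
  rw [wderiv, wderiv, h.fderiv_eq]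

lemma wderiv_const_mul (a : ℂ) {g : ℂ → ℂ} {z : ℂ} (hg : DifferentiableAt ℝ g z) :
    wderiv (fun w => a * g w) z = a * wderiv g z := by
  unfold wderiv
  rw [fderiv_const_mul hg]
  simp only [ContinuousLinearMap.smul_apply, smul_eq_mul]
  ring

lemma nabla_congr {κ α : ℝ} {f g : ℂ → ℂ} {z : ℂ} (h : f =ᶠ[nhds z] g) :
    nabla κ α f z = nabla κ α g z := by
  unfold nabla
  rw [wderiv_congr h, h.eq_of_nhds]

lemma nabla_const_mul {κ α : ℝ} (a : ℂ) {g : ℂ → ℂ} {z : ℂ} (hg : DifferentiableAt ℝ g z) :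
    nabla κ α (fun w => a * g w) z = a * nabla κ α g z := by
  unfold nabla
  rw [wderiv_const_mul a hg]
  ring

lemma contDiffOn_wderiv {g : ℂ → ℂ} {s : Set ℂ} (hs : IsOpen s)
    (hg : ContDiffOn ℝ (⊤ : ℕ∞) g s) : ContDiffOn ℝ (⊤ : ℕ∞) (wderiv g) s := by
  have h := ((contDiffOn_infty_iff_fderiv_of_isOpen hs).mp hg).2
  unfold wderiv
  exact (((h.clm_apply contDiffOn_const).sub
    (contDiffOn_const.mul (h.clm_apply contDiffOn_const))).div_const 2)

lemma contDiffOn_Dop {κ : ℝ} {g : ℂ → ℂ} {s : Set ℂ} (hs : IsOpen s)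
    (hg : ContDiffOn ℝ (⊤ : ℕ∞) g s) : ContDiffOn ℝ (⊤ : ℕ∞) (Dop κ g) s := by
  unfold Dop
  have hq : ContDiff ℝ (⊤ : ℕ∞) fun w : ℂ => ((1 + κ * Complex.normSq w : ℝ) : ℂ) :=
    Complex.ofRealCLM.contDiff.comp (contDiff_q κ)
  exact ((hq.pow 2).contDiffOn).mul (contDiffOn_wderiv hs hg)

lemma contDiffOn_DopIter {κ : ℝ} {g : ℂ → ℂ} {s : Set ℂ} (hs : IsOpen s)
    (hg : ContDiffOn ℝ (⊤ : ℕ∞) g s) (m : ℕ) :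
    ContDiffOn ℝ (⊤ : ℕ∞) ((Dop κ)^[m] g) s := by
  induction m with
  | zero => exact hg
  | succ n ih =>
      rw [Function.iterate_succ_apply']
      exact contDiffOn_Dop hs ih

lemma DopIter_congr {κ : ℝ} {g₁ g₂ : ℂ → ℂ} {s : Set ℂ} (hs : IsOpen s)
    (h : ∀ w ∈ s, g₁ w = g₂ w) (m : ℕ) :
    ∀ w ∈ s, (Dop κ)^[m] g₁ w = (Dop κ)^[m] g₂ w := by
  induction m with
  | zero => exact h
  | succ n ih =>
      intro w hw
      rw [Function.iterate_succ_apply', Function.iterate_succ_apply']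
      unfold Dop
      congr 1
      exact wderiv_congr (Filter.eventuallyEq_of_mem (hs.mem_nhds hw) ih)

lemma nabla_conj {κ : ℝ} (hκ : κ ≠ 0) (ν : ℝ) {h : ℂ → ℂ} {z : ℂ}
    (hz : 0 < 1 + κ * Complex.normSq z) (hh : DifferentiableAt ℝ h z) :
    nabla κ (ν + κ)
      (fun w => (((1 + κ * Complex.normSq w) ^ (ν / κ + 1) : ℝ) : ℂ) * h w) z
      = -(((1 + κ * Complex.normSq z) ^ (ν / κ) : ℝ) : ℂ) * Dop κ h z := by
  obtain ⟨hPd, hPw⟩ := hasFDerivAt_P κ (ν / κ + 1) z hz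
  rw [nabla, wderiv_mul hPd hh, hPw, Dop]
  set t : ℝ := 1 + κ * Complex.normSq z with ht
  have h1 : t ^ (ν / κ + 1 - 1) = t ^ (ν / κ) := by norm_num
  have h2 : t ^ (ν / κ + 1) = t ^ (ν / κ) * t := Real.rpow_add_one (ne_of_gt hz) _
  rw [h1, h2]
  have hκC : (κ : ℂ) ≠ 0 := Complex.ofReal_ne_zero.mpr hκ
  push_cast
  field_simp
  ring

lemma stmt6_aux (κ : ℝ) (hκ : κ ≠ 0) (f : ℂ → ℂ)
    (hf : ContDiffOn ℝ (⊤ : ℕ∞) f {z : ℂ | 0 < 1 + κ * Complex.normSq z}) :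
    ∀ (m : ℕ) (ν : ℝ) (z : ℂ), 0 < 1 + κ * Complex.normSq z →
    nablaChain κ m ν f z
      = (-1 : ℂ) ^ m * (((1 + κ * Complex.normSq z) ^ (ν / κ) : ℝ) : ℂ) *
          (Dop κ)^[m]
            (fun w => (((1 + κ * Complex.normSq w) ^ (-(ν / κ + m)) : ℝ) : ℂ) * f w) z := by
  intro m
  induction m with
  | zero =>
      intro ν z hz
      simp only [nablaChain, Function.iterate_zero, id_eq, pow_zero, Nat.cast_zero, one_mul]
      have h1 : (1 + κ * Complex.normSq z) ^ (ν / κ)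
          * (1 + κ * Complex.normSq z) ^ (-(ν / κ + (0:ℝ))) = 1 := by
        rw [← Real.rpow_add hz]
        norm_num
      calc f z = (((1 + κ * Complex.normSq z) ^ (ν / κ)
            * (1 + κ * Complex.normSq z) ^ (-(ν / κ + (0:ℝ))) : ℝ) : ℂ) * f z := by
              rw [h1]; simp
        _ = _ := by push_cast; ring
  | succ m ih =>
      intro ν z hz
      have hΩ := isOpen_Omega κ
      set Ω : Set ℂ := {z : ℂ | 0 < 1 + κ * Complex.normSq z} with hΩdef
      set e : ℝ := -(ν / κ + ((m + 1 : ℕ) : ℝ)) with he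
      set G : ℂ → ℂ := fun w => (((1 + κ * Complex.normSq w) ^ e : ℝ) : ℂ) * f w with hG
      have hGsmooth : ContDiffOn ℝ (⊤ : ℕ∞) G Ω := (contDiffOn_P κ e).mul hf
      have hexp : ∀ u : ℂ, ((1 + κ * Complex.normSq u) ^ (-((ν + κ) / κ + (m : ℝ))) : ℝ)
          = (1 + κ * Complex.normSq u) ^ e := by
        intro u
        congr 1
        rw [he]
        push_cast
        field_simp
        ring
      have hGfun : (fun u : ℂ => (((1 + κ * Complex.normSq u) ^ (-((ν + κ) / κ + (m : ℝ))) : ℝ) : ℂ) * f u) = G := by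
        funext u; rw [hexp u]
      have hexp2 : (ν + κ) / κ = ν / κ + 1 := by field_simp
      have heq : nablaChain κ m (ν + κ) f =ᶠ[nhds z]
          fun w => (-1 : ℂ) ^ m *
            ((((1 + κ * Complex.normSq w) ^ (ν / κ + 1) : ℝ) : ℂ) * (Dop κ)^[m] G w) := by
        refine Filter.eventuallyEq_of_mem (hΩ.mem_nhds hz) (fun w hw => ?_)
        have := ih (ν + κ) w hw
        rw [hGfun, hexp2] at this
        rw [this]; ring
      have hdiff : DifferentiableAt ℝ
          (fun w => (((1 + κ * Complex.normSq w) ^ (ν / κ + 1) : ℝ) : ℂ) * (Dop κ)^[m] G w) z := by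
        have h1 : ContDiffOn ℝ (⊤ : ℕ∞)
            (fun w => (((1 + κ * Complex.normSq w) ^ (ν / κ + 1) : ℝ) : ℂ) * (Dop κ)^[m] G w) Ω :=
          (contDiffOn_P κ _).mul (contDiffOn_DopIter hΩ hGsmooth m)
        have hle : (1 : WithTop ℕ∞) ≤ ((⊤ : ℕ∞) : WithTop ℕ∞) := by exact_mod_cast le_top
        exact ((h1.differentiableOn (by simp)) z hz).differentiableAt (hΩ.mem_nhds hz)
      have hle : (1 : WithTop ℕ∞) ≤ ((⊤ : ℕ∞) : WithTop ℕ∞) := by exact_mod_cast le_top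
      have hDdiff : DifferentiableAt ℝ ((Dop κ)^[m] G) z :=
        (((contDiffOn_DopIter hΩ hGsmooth m).differentiableOn (by simp)) z hz).differentiableAt
          (hΩ.mem_nhds hz)
      show nabla κ (ν + κ) (nablaChain κ m (ν + κ) f) z = _
      rw [nabla_congr heq, nabla_const_mul _ hdiff, nabla_conj hκ ν hz hDdiff,
        ← Function.iterate_succ_apply' (Dop κ) m G]
      ring

theorem stmt6 (κ : ℝ) (hκ : κ ≠ 0) (ν : ℝ) (m : ℕ) (hm : 1 ≤ m) (f : ℂ → ℂ)
    (hf : ContDiffOn ℝ (⊤ : ℕ∞) f {z : ℂ | 0 < 1 + κ * Complex.normSq z})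
    (z : ℂ) (hz : 0 < 1 + κ * Complex.normSq z) :
    nablaChain κ m ν f z
      = (-1 : ℂ) ^ m * (((1 + κ * Complex.normSq z) ^ (ν / κ) : ℝ) : ℂ) *
          (Dop κ)^[m]
            (fun w => (((1 + κ * Complex.normSq w) ^ (-(ν / κ + m)) : ℝ) : ℂ) * f w) z :=
  stmt6_aux κ hκ f hf m ν z hz
end

section
/- Let κ ∈ ℝ, α ∈ ℝ, and let n ≥ 0 be an integer. Then for every z ∈ ℂ with 1 + κ|z|² > 0, (∂^n/∂z̄^n)[w ↦ (1+κ|w|²)^{α+n}](z) = (α+1)_n · κ^n · z^n · (1+κ|z|²)^{α}, where (a)_n = a(a+1)⋯(a+n−1) is the Pochhammer symbol (with (a)_0 = 1). -/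
open Complex MeasureTheory Filter

lemma hasFDerivAt_aux (κ β : ℝ) (c : ℂ) (k : ℕ) (z : ℂ) (hz : 0 < 1 + κ * Complex.normSq z) :
    HasFDerivAt (fun w : ℂ => c * w ^ k * (((1 + κ * Complex.normSq w) ^ β : ℝ) : ℂ))
      ((c * z ^ k) • (Complex.ofRealCLM.comp
          ((β * (1 + κ * Complex.normSq z) ^ (β - 1)) •
            (κ • ((z.re • Complex.reCLM + z.re • Complex.reCLM)
              + (z.im • Complex.imCLM + z.im • Complex.imCLM)))))
        + (((1 + κ * Complex.normSq z) ^ β : ℝ) : ℂ) •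
            ((c * (k * z ^ (k - 1))) • (1 : ℂ →L[ℝ] ℂ))) z := by
  have hre : HasFDerivAt (fun w : ℂ => w.re * w.re)
      ((z.re • Complex.reCLM) + (z.re • Complex.reCLM)) z :=
    (Complex.reCLM.hasFDerivAt).mul (Complex.reCLM.hasFDerivAt)
  have him : HasFDerivAt (fun w : ℂ => w.im * w.im)
      ((z.im • Complex.imCLM) + (z.im • Complex.imCLM)) z :=
    (Complex.imCLM.hasFDerivAt).mul (Complex.imCLM.hasFDerivAt)
  have hnsq : HasFDerivAt (fun w : ℂ => Complex.normSq w)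
      ((z.re • Complex.reCLM + z.re • Complex.reCLM)
        + (z.im • Complex.imCLM + z.im • Complex.imCLM)) z := by
    exact (hre.add him).congr_of_eventuallyEq (Filter.Eventually.of_forall fun w => by simp [Complex.normSq_apply])
  have hr : HasFDerivAt (fun w : ℂ => 1 + κ * Complex.normSq w)
      (κ • ((z.re • Complex.reCLM + z.re • Complex.reCLM)
        + (z.im • Complex.imCLM + z.im • Complex.imCLM))) z :=
    (hnsq.const_mul κ).const_add 1
  have hp : HasDerivAt (fun x : ℝ => x ^ β)
      (β * (1 + κ * Complex.normSq z) ^ (β - 1)) (1 + κ * Complex.normSq z) :=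
    Real.hasDerivAt_rpow_const (Or.inl hz.ne')
  have hQr : HasFDerivAt (fun w : ℂ => (1 + κ * Complex.normSq w) ^ β)
      ((β * (1 + κ * Complex.normSq z) ^ (β - 1)) •
        (κ • ((z.re • Complex.reCLM + z.re • Complex.reCLM)
          + (z.im • Complex.imCLM + z.im • Complex.imCLM)))) z :=
    by have := hp.comp_hasFDerivAt z hr; exact this
  have hQ : HasFDerivAt (fun w : ℂ => (((1 + κ * Complex.normSq w) ^ β : ℝ) : ℂ))
      (Complex.ofRealCLM.comp
        ((β * (1 + κ * Complex.normSq z) ^ (β - 1)) •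
          (κ • ((z.re • Complex.reCLM + z.re • Complex.reCLM)
            + (z.im • Complex.imCLM + z.im • Complex.imCLM))))) z :=
    Complex.ofRealCLM.hasFDerivAt.comp z hQr
  have hP : HasFDerivAt (fun w : ℂ => c * w ^ k)
      ((c * (k * z ^ (k - 1))) • (1 : ℂ →L[ℝ] ℂ)) z :=
    (((hasDerivAt_pow k z).const_mul c)).complexToReal_fderiv
  exact hP.mul hQ

lemma wderivBar_aux (κ β : ℝ) (c : ℂ) (k : ℕ) (z : ℂ) (hz : 0 < 1 + κ * Complex.normSq z) :
    wderivBar (fun w : ℂ => c * w ^ k * (((1 + κ * Complex.normSq w) ^ β : ℝ) : ℂ)) z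
      = c * ((β * κ : ℝ) : ℂ) * z ^ (k + 1) *
          (((1 + κ * Complex.normSq z) ^ (β - 1) : ℝ) : ℂ) := by
  rw [wderivBar, (hasFDerivAt_aux κ β c k z hz).fderiv]
  simp only [ContinuousLinearMap.add_apply, ContinuousLinearMap.smul_apply,
    ContinuousLinearMap.comp_apply, ContinuousLinearMap.coe_smul', Pi.smul_apply,
    Complex.ofRealCLM_apply, Complex.reCLM_apply, Complex.imCLM_apply,
    ContinuousLinearMap.one_apply, Complex.one_re, Complex.one_im, Complex.I_re,
    Complex.I_im, smul_eq_mul]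
  push_cast
  linear_combination (c * (β:ℂ) * ((((1 + κ * Complex.normSq z) ^ (β-1) : ℝ)):ℂ) * (κ:ℂ) * z ^ k) * (Complex.re_add_im z)
    + (((((1 + κ * Complex.normSq z) ^ β : ℝ)):ℂ) * c * (k:ℂ) * z ^ (k-1) / 2) * Complex.I_sq

lemma wderivBar_congr' {f g : ℂ → ℂ} {z : ℂ} (h : f =ᶠ[nhds z] g) :
    wderivBar f z = wderivBar g z := by
  unfold wderivBar; rw [h.fderiv_eq]

lemma iter_formula (κ β : ℝ) (k : ℕ) : ∀ z : ℂ, 0 < 1 + κ * Complex.normSq z →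
    wderivBar^[k] (fun w => (((1 + κ * Complex.normSq w) ^ β : ℝ) : ℂ)) z
      = ((∏ i ∈ Finset.range k, (β - i) : ℝ) : ℂ) * (κ : ℂ) ^ k * z ^ k *
          (((1 + κ * Complex.normSq z) ^ (β - k) : ℝ) : ℂ) := by
  induction k with
  | zero => intro z hz; simp
  | succ k ih =>
    intro z hz
    rw [Function.iterate_succ_apply']
    have hopen : IsOpen {w : ℂ | 0 < 1 + κ * Complex.normSq w} :=
      isOpen_lt continuous_const (by continuity)
    have hev : wderivBar^[k] (fun w => (((1 + κ * Complex.normSq w) ^ β : ℝ) : ℂ))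
        =ᶠ[nhds z] fun w => (((∏ i ∈ Finset.range k, (β - i) : ℝ) : ℂ) * (κ : ℂ) ^ k) * w ^ k *
          (((1 + κ * Complex.normSq w) ^ (β - k) : ℝ) : ℂ) := by
      filter_upwards [hopen.mem_nhds hz] with w hw
      rw [ih w hw]
    rw [wderivBar_congr' hev, wderivBar_aux κ (β - k) _ k z hz,
      show (β - (k : ℝ)) - 1 = β - ((k + 1 : ℕ) : ℝ) by push_cast; ring,
      Finset.prod_range_succ]
    push_cast
    ring

theorem stmt9 (κ α : ℝ) (n : ℕ) (z : ℂ) (hz : 0 < 1 + κ * Complex.normSq z) :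
    wderivBar^[n] (fun w => (((1 + κ * Complex.normSq w) ^ (α + n) : ℝ) : ℂ)) z
      = ((risingFactorial (α + 1) n : ℝ) : ℂ) * (κ : ℂ) ^ n * z ^ n *
          (((1 + κ * Complex.normSq z) ^ α : ℝ) : ℂ) := by
  have h := iter_formula κ (α + n) n z hz
  rw [show α + (n : ℝ) - n = α by ring] at h
  have hprod : (∏ i ∈ Finset.range n, (α + (n : ℝ) - i)) = risingFactorial (α + 1) n := by
    rw [risingFactorial, ← Finset.prod_range_reflect (fun i => α + 1 + (i : ℝ)) n]
    apply Finset.prod_congr rfl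
    intro j hj
    have hj' := Finset.mem_range.mp hj
    have h1 : n - 1 - j = n - (j + 1) := by omega
    rw [h1, Nat.cast_sub (by omega)]
    push_cast
    ring
  rw [h, hprod]
end

section
/- Assume κ ≠ 0, let ν be real, and let m, n ≥ 0 be integers. Define Φ_{m,n}(z) = (∇_{ν+κ} ∘ ∇_{ν+2κ} ∘ ⋯ ∘ ∇_{ν+mκ})[w ↦ (1+κ|w|²)^{−(ν/κ+m)} w^n](z) on Ω = {z : 1+κ|z|² > 0} (the composition being the identity when m = 0). Then (L_κ^ν Φ_{m,n})(z) = (ν(2m+1) + m(m+1)κ) · Φ_{m,n}(z) for every z ∈ Ω. -/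
open Complex MeasureTheory Filter

namespace S12
open MvPolynomial

abbrev P2 := MvPolynomial (Fin 2) ℂ

noncomputable def Ev (P : P2) (z : ℂ) : ℂ := eval ![z, (starRingEnd ℂ) z] P
noncomputable def mkL (a b : ℂ) : ℂ →L[ℝ] ℂ :=
  a • (ContinuousLinearMap.id ℝ ℂ) + b • (Complex.conjCLE.toContinuousLinearMap)

lemma mkL_apply (a b v : ℂ) : mkL a b v = a * v + b * (starRingEnd ℂ) v := by simp [mkL]
lemma mkL_add (a b c d : ℂ) : mkL (a + c) (b + d) = mkL a b + mkL c d := by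
  ext v; simp [mkL_apply]; ring
lemma mkL_smul (c a b : ℂ) : c • mkL a b = mkL (c * a) (c * b) := by
  ext v; simp [mkL_apply]; ring
lemma mkL_zero : mkL 0 0 = 0 := by ext v; simp [mkL_apply]

lemma wderiv_eq {f : ℂ → ℂ} {a b z : ℂ} (h : HasFDerivAt f (mkL a b) z) :
    wderiv f z = a := by
  rw [wderiv, h.fderiv, mkL_apply, mkL_apply]
  simp only [map_one, Complex.conj_I, mul_one]
  linear_combination ((b - a)/2) * Complex.I_sq

lemma wderivBar_eq {f : ℂ → ℂ} {a b z : ℂ} (h : HasFDerivAt f (mkL a b) z) :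
    wderivBar f z = b := by
  rw [wderivBar, h.fderiv, mkL_apply, mkL_apply]
  simp only [map_one, Complex.conj_I, mul_one]
  linear_combination ((a - b)/2) * Complex.I_sq

@[simp] lemma Ev_C (a : ℂ) (z : ℂ) : Ev (C a) z = a := by simp [Ev]
@[simp] lemma Ev_add (P Q : P2) (z : ℂ) : Ev (P + Q) z = Ev P z + Ev Q z := by simp [Ev]
@[simp] lemma Ev_mul (P Q : P2) (z : ℂ) : Ev (P * Q) z = Ev P z * Ev Q z := by simp [Ev]
@[simp] lemma Ev_sub (P Q : P2) (z : ℂ) : Ev (P - Q) z = Ev P z - Ev Q z := by simp [Ev]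
@[simp] lemma Ev_neg (P : P2) (z : ℂ) : Ev (-P) z = -Ev P z := by simp [Ev]
@[simp] lemma Ev_zero (z : ℂ) : Ev 0 z = 0 := by simp [Ev]
@[simp] lemma Ev_one (z : ℂ) : Ev 1 z = 1 := by simp [Ev]
@[simp] lemma Ev_pow (P : P2) (k : ℕ) (z : ℂ) : Ev (P ^ k) z = Ev P z ^ k := by simp [Ev]
@[simp] lemma Ev_X0 (z : ℂ) : Ev (X 0) z = z := by simp [Ev]
@[simp] lemma Ev_X1 (z : ℂ) : Ev (X 1) z = (starRingEnd ℂ) z := by simp [Ev]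

lemma hasFDerivAt_Ev (P : P2) (z : ℂ) :
    HasFDerivAt (fun w => Ev P w) (mkL (Ev (pderiv 0 P) z) (Ev (pderiv 1 P) z)) z := by
  induction P using MvPolynomial.induction_on with
  | C a =>
      simp only [pderiv_C, Ev_zero, mkL_zero, Ev_C]
      exact hasFDerivAt_const a z
  | add p q hp hq =>
      simp only [map_add, Ev_add, mkL_add]
      exact hp.add hq
  | mul_X p i hp =>
      have hi : i = 0 ∨ i = 1 := by fin_cases i <;> simp
      have hXi : HasFDerivAt (fun w => Ev (X i) w)
          (mkL (Ev (pderiv 0 (X i)) z) (Ev (pderiv 1 (X i)) z)) z := by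
        rcases hi with hi | hi <;> subst hi
        · simp only [Ev_X0, pderiv_X_self, pderiv_X_of_ne (show (0:Fin 2) ≠ 1 by decide),
            Ev_one, Ev_zero]
          have h1 : mkL 1 0 = ContinuousLinearMap.id ℝ ℂ := by ext v; simp [mkL_apply]
          rw [h1]; exact hasFDerivAt_id z
        · simp only [Ev_X1, pderiv_X_self, pderiv_X_of_ne (show (1:Fin 2) ≠ 0 by decide),
            Ev_one, Ev_zero]
          have h1 : mkL 0 1 = Complex.conjCLE.toContinuousLinearMap := by ext v; simp [mkL_apply]
          rw [h1]
          exact Complex.conjCLE.toContinuousLinearMap.hasFDerivAt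
      have hmul := hp.mul hXi
      have heq : mkL (Ev (pderiv 0 (p * X i)) z) (Ev (pderiv 1 (p * X i)) z)
          = Ev p z • mkL (Ev (pderiv 0 (X i)) z) (Ev (pderiv 1 (X i)) z)
            + Ev (X i) z • mkL (Ev (pderiv 0 p) z) (Ev (pderiv 1 p) z) := by
        rw [mkL_smul, mkL_smul, ← mkL_add]
        simp only [pderiv_mul, Ev_add, Ev_mul]
        congr 1 <;> ring
      rw [heq]
      exact hmul.congr_of_eventuallyEq (Filter.Eventually.of_forall fun w => by simp)

lemma conj_add_mul (z v : ℂ) :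
    (starRingEnd ℂ) z * v + z * (starRingEnd ℂ) v
      = ((2 * (z.re * v.re + z.im * v.im) : ℝ) : ℂ) := by
  apply Complex.ext <;> simp [Complex.add_re, Complex.mul_re, Complex.mul_im] <;> ring

lemma hasFDerivAt_rpow (κ r : ℝ) (z : ℂ) (hz : 0 < 1 + κ * Complex.normSq z) :
    HasFDerivAt (fun w : ℂ => (((1 + κ * Complex.normSq w) ^ r : ℝ) : ℂ))
      (mkL (((r * κ * (1 + κ * Complex.normSq z) ^ (r-1) : ℝ) : ℂ) * (starRingEnd ℂ) z)
           (((r * κ * (1 + κ * Complex.normSq z) ^ (r-1) : ℝ) : ℂ) * z)) z := by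
  have h1 : HasFDerivAt (fun w : ℂ => 1 + κ * Complex.normSq w)
      ((2*κ*z.re) • Complex.reCLM + (2*κ*z.im) • Complex.imCLM) z := by
    have h1 : HasFDerivAt (fun w : ℂ => w.re * w.re + w.im * w.im)
        ((z.re • Complex.reCLM + z.re • Complex.reCLM)
          + (z.im • Complex.imCLM + z.im • Complex.imCLM)) z :=
      ((Complex.reCLM.hasFDerivAt.mul Complex.reCLM.hasFDerivAt).add
        (Complex.imCLM.hasFDerivAt.mul Complex.imCLM.hasFDerivAt))
    have h2 := (h1.const_mul κ).const_add 1
    have heq : (fun w : ℂ => 1 + κ * (w.re * w.re + w.im * w.im))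
        = fun w : ℂ => 1 + κ * Complex.normSq w := by
      funext w; rw [Complex.normSq_apply]
    rw [heq] at h2
    refine h2.congr_fderiv ?_
    ext v; simp; ring
  have h2 : HasDerivAt (fun x : ℝ => x ^ r) (r * (1 + κ * Complex.normSq z) ^ (r - 1))
      (1 + κ * Complex.normSq z) := Real.hasDerivAt_rpow_const (Or.inl (ne_of_gt hz))
  have h3 := h2.comp_hasFDerivAt z h1
  have h4 := Complex.ofRealCLM.hasFDerivAt.comp z h3
  refine h4.congr_fderiv ?_
  ext v
  simp only [ContinuousLinearMap.coe_comp', Function.comp_apply, ContinuousLinearMap.coe_smul',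
    Pi.smul_apply, ContinuousLinearMap.add_apply, Complex.ofRealCLM_apply, mkL_apply,
    Complex.reCLM_apply, Complex.imCLM_apply, smul_eq_mul]
  have hc := conj_add_mul z v
  push_cast at hc ⊢
  linear_combination (-((r:ℂ) * (κ:ℂ) * ((1 + κ * Complex.normSq z) ^ (r-1) : ℝ))) * hc

noncomputable def Rf (κ r : ℝ) (P : P2) (z : ℂ) : ℂ :=
  (((1 + κ * Complex.normSq z) ^ r : ℝ) : ℂ) * Ev P z

noncomputable def rhoP (κ : ℝ) : P2 := 1 + C (κ : ℂ) * X 0 * X 1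

@[simp] lemma Ev_rhoP (κ : ℝ) (z : ℂ) :
    Ev (rhoP κ) z = ((1 + κ * Complex.normSq z : ℝ) : ℂ) := by
  simp only [rhoP, Ev_add, Ev_one, Ev_mul, Ev_C, Ev_X0, Ev_X1, Complex.mul_conj]
  push_cast
  rw [mul_assoc, Complex.mul_conj]

noncomputable def D0 (κ r : ℝ) (P : P2) : P2 :=
  C ((r : ℂ) * (κ : ℂ)) * X 1 * P + rhoP κ * pderiv 0 P
noncomputable def D1 (κ r : ℝ) (P : P2) : P2 :=
  C ((r : ℂ) * (κ : ℂ)) * X 0 * P + rhoP κ * pderiv 1 P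

lemma rpow_fact {κ r : ℝ} {z : ℂ} (hz : 0 < 1 + κ * Complex.normSq z) :
    (1 + κ * Complex.normSq z) ^ r = (1 + κ * Complex.normSq z) ^ (r - 1)
      * (1 + κ * Complex.normSq z) := by
  rw [← Real.rpow_add_one (ne_of_gt hz) (r - 1), sub_add_cancel]

lemma hasFDerivAt_Rf (κ r : ℝ) (P : P2) (z : ℂ) (hz : 0 < 1 + κ * Complex.normSq z) :
    HasFDerivAt (Rf κ r P)
      (mkL (Rf κ (r-1) (D0 κ r P) z) (Rf κ (r-1) (D1 κ r P) z)) z := by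
  have hm := (hasFDerivAt_rpow κ r z hz).mul (hasFDerivAt_Ev P z)
  have heq : mkL (Rf κ (r-1) (D0 κ r P) z) (Rf κ (r-1) (D1 κ r P) z)
      = (((1 + κ * Complex.normSq z) ^ r : ℝ) : ℂ)
          • mkL (Ev (pderiv 0 P) z) (Ev (pderiv 1 P) z)
        + Ev P z • mkL (((r * κ * (1 + κ * Complex.normSq z) ^ (r-1) : ℝ) : ℂ) * (starRingEnd ℂ) z)
            (((r * κ * (1 + κ * Complex.normSq z) ^ (r-1) : ℝ) : ℂ) * z) := by
    rw [mkL_smul, mkL_smul, ← mkL_add]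
    have hf := rpow_fact (r := r) hz
    simp only [Rf, D0, D1, Ev_add, Ev_mul, Ev_C, Ev_X0, Ev_X1, Ev_rhoP]
    congr 1 <;> · rw [hf]; push_cast; ring
  rw [heq]
  exact hm.congr_of_eventuallyEq (Filter.Eventually.of_forall fun w => by simp [Rf])

lemma wderiv_Rf (κ r : ℝ) (P : P2) (z : ℂ) (hz : 0 < 1 + κ * Complex.normSq z) :
    wderiv (Rf κ r P) z = Rf κ (r-1) (D0 κ r P) z :=
  wderiv_eq (hasFDerivAt_Rf κ r P z hz)

lemma wderivBar_Rf (κ r : ℝ) (P : P2) (z : ℂ) (hz : 0 < 1 + κ * Complex.normSq z) :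
    wderivBar (Rf κ r P) z = Rf κ (r-1) (D1 κ r P) z :=
  wderivBar_eq (hasFDerivAt_Rf κ r P z hz)

lemma isOpen_Omega (κ : ℝ) : IsOpen {w : ℂ | 0 < 1 + κ * Complex.normSq w} :=
  isOpen_lt continuous_const (continuous_const.add (continuous_const.mul Complex.continuous_normSq))

lemma ev_eq_of_omega {κ : ℝ} {f g : ℂ → ℂ}
    (h : ∀ w, 0 < 1 + κ * Complex.normSq w → f w = g w) {z : ℂ}
    (hz : 0 < 1 + κ * Complex.normSq z) : f =ᶠ[nhds z] g :=
  Filter.eventuallyEq_of_mem ((isOpen_Omega κ).mem_nhds hz) h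

lemma wderiv_congr {f g : ℂ → ℂ} {z : ℂ} (h : f =ᶠ[nhds z] g) : wderiv f z = wderiv g z := by
  rw [wderiv, wderiv, h.fderiv_eq]

lemma wderivBar_congr {f g : ℂ → ℂ} {z : ℂ} (h : f =ᶠ[nhds z] g) :
    wderivBar f z = wderivBar g z := by
  rw [wderivBar, wderivBar, h.fderiv_eq]

noncomputable def NP (κ α r : ℝ) (P : P2) : P2 :=
  C ((α : ℂ) - (r : ℂ) * (κ : ℂ)) * X 1 * P - rhoP κ * pderiv 0 P

lemma nabla_rep (κ α r : ℝ) (P : P2) (z : ℂ) (hz : 0 < 1 + κ * Complex.normSq z) :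
    nabla κ α (Rf κ r P) z = Rf κ r (NP κ α r P) z := by
  rw [nabla, wderiv_Rf κ r P z hz]
  have hf := rpow_fact (r := r) hz
  simp only [Rf, NP, D0, Ev_add, Ev_sub, Ev_mul, Ev_C, Ev_X0, Ev_X1, Ev_rhoP]
  rw [hf]; push_cast; ring

noncomputable def TL (κ ν r : ℝ) (P : P2) : P2 :=
  -(D0 κ (r-1) (D1 κ r P)
    + C (ν : ℂ) * (X 0 * D0 κ r P - X 1 * D1 κ r P)
    - C ((ν : ℂ)^2) * X 0 * X 1 * P)

lemma twistedLap_rep (κ ν r : ℝ) (P : P2) (z : ℂ) (hz : 0 < 1 + κ * Complex.normSq z) :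
    twistedLap κ ν (Rf κ r P) z = Rf κ r (TL κ ν r P) z := by
  have hbar : wderiv (wderivBar (Rf κ r P)) z
      = Rf κ (r-1-1) (D0 κ (r-1) (D1 κ r P)) z := by
    have h1 : wderiv (wderivBar (Rf κ r P)) z = wderiv (Rf κ (r-1) (D1 κ r P)) z :=
      wderiv_congr (ev_eq_of_omega (fun w hw => wderivBar_Rf κ r P w hw) hz)
    rw [h1, wderiv_Rf κ (r-1) _ z hz]
  rw [twistedLap, hbar, wderiv_Rf κ r P z hz, wderivBar_Rf κ r P z hz]
  have hf := rpow_fact (r := r) hz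
  have hf1 := rpow_fact (r := r - 1) hz
  simp only [Rf, TL, Ev_neg, Ev_add, Ev_sub, Ev_mul, Ev_C, Ev_X0, Ev_X1]
  have hns : ((Complex.normSq z : ℝ) : ℂ) = z * (starRingEnd ℂ) z := (Complex.mul_conj z).symm
  rw [hns, hf, hf1]
  push_cast
  ring

lemma pd01 : pderiv (0 : Fin 2) (X 1 : P2) = 0 := pderiv_X_of_ne (by decide)
lemma pd10 : pderiv (1 : Fin 2) (X 0 : P2) = 0 := pderiv_X_of_ne (by decide)

lemma pderiv_pderiv_comm {σ : Type*} {R : Type*} [CommSemiring R] [DecidableEq σ]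
    (i j : σ) (p : MvPolynomial σ R) :
    pderiv i (pderiv j p) = pderiv j (pderiv i p) := by
  induction p using MvPolynomial.induction_on with
  | C a => simp
  | add p q hp hq => simp [hp, hq]
  | mul_X p k hp =>
      by_cases hik : i = k <;> by_cases hjk : j = k
      · subst hik; subst hjk; rfl
      · subst hik
        simp only [pderiv_mul, pderiv_X_self, pderiv_X_of_ne hjk, pderiv_X_of_ne (Ne.symm hjk),
          mul_one, mul_zero, zero_mul, add_zero, zero_add, map_add, map_zero, map_one, hp,
          pderiv_one]
      · subst hjk
        simp only [pderiv_mul, pderiv_X_self, pderiv_X_of_ne hik, pderiv_X_of_ne (Ne.symm hik),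
          mul_one, mul_zero, zero_mul, add_zero, zero_add, map_add, map_zero, map_one, hp,
          pderiv_one]
      · simp only [pderiv_mul, pderiv_X_of_ne hik, pderiv_X_of_ne hjk,
          pderiv_X_of_ne (Ne.symm hik), pderiv_X_of_ne (Ne.symm hjk),
          mul_one, mul_zero, zero_mul, add_zero, zero_add, map_add, map_zero, hp]

lemma pdswap (p : P2) : pderiv 1 (pderiv 0 p) = pderiv 0 (pderiv 1 p) :=
  pderiv_pderiv_comm 1 0 p

set_option maxHeartbeats 4000000 in
lemma intertwine (κ ν r : ℝ) (q : P2) :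
    TL κ ν r (NP κ (ν + κ) r q)
      = NP κ (ν + κ) r (TL κ (ν + κ) r q) + C ((ν:ℂ) + (ν:ℂ) + (κ:ℂ)) * NP κ (ν + κ) r q := by
  simp only [TL, NP, D0, D1, rhoP]
  simp only [map_add, map_sub, map_neg, map_zero, pderiv_mul, pderiv_C, pderiv_one,
    pderiv_X_self, pd01, pd10, pdswap, mul_zero, zero_mul, add_zero, zero_add, mul_one]
  simp only [Complex.ofReal_add, Complex.ofReal_sub, Complex.ofReal_neg, Complex.ofReal_one,
    map_add, map_sub, map_neg, map_mul, map_pow, map_one]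
  ring
lemma NP_Cmul (κ α r : ℝ) (c : ℂ) (q : P2) :
    NP κ α r (C c * q) = C c * NP κ α r q := by
  simp only [NP, pderiv_mul, pderiv_C, zero_mul, zero_add]
  ring

noncomputable def QPoly (κ : ℝ) (n : ℕ) : ℕ → ℝ → ℝ → P2
  | 0, _, _ => X 0 ^ n
  | m + 1, ν, r => NP κ (ν + κ) r (QPoly κ n m (ν + κ) r)

lemma eigen (κ : ℝ) (n : ℕ) :
    ∀ (m : ℕ) (ν r : ℝ), r * κ = -(ν + m * κ) →
      TL κ ν r (QPoly κ n m ν r)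
        = C (((ν * (2 * m + 1) + m * (m + 1) * κ : ℝ) : ℂ)) * QPoly κ n m ν r := by
  intro m
  induction m with
  | zero =>
      intro ν r hr
      simp only [Nat.cast_zero, zero_mul, add_zero, mul_zero, zero_add, mul_one,
        zero_mul] at hr ⊢
      have hC : (C ((r : ℂ)) * C ((κ : ℂ)) : P2) = -C ((ν : ℂ)) := by
        rw [← map_mul, ← map_neg]
        exact congrArg C (by exact_mod_cast hr)
      cases n with
      | zero =>
          simp only [QPoly, pow_zero, TL, NP, D0, D1, rhoP, pderiv_one, mul_zero, mul_one,
            map_add, map_mul, map_one, map_sub, map_neg, pderiv_mul, pderiv_C,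
            pderiv_X_self, pd01, pd10, zero_mul, add_zero, zero_add, map_zero,
            Complex.ofReal_sub, Complex.ofReal_one, map_pow]
          linear_combination (-(1 + (C ((r:ℂ)) * C ((κ:ℂ)) - C ((ν:ℂ))) * X 0 * X 1) : P2) * hC
      | succ k =>
          simp only [QPoly, TL, NP, D0, D1, rhoP, pderiv_pow, pderiv_X_self, pd01, pd10,
            map_add, map_mul, map_one, map_sub, map_neg, pderiv_mul, pderiv_C,
            zero_mul, mul_zero, add_zero, zero_add, mul_one, map_zero,
            Nat.add_sub_cancel, Nat.cast_add, Nat.cast_one, map_natCast,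
            Complex.ofReal_sub, Complex.ofReal_one, map_pow]
          linear_combination (-(X 0 ^ (k+1) + (C ((r:ℂ)) * C ((κ:ℂ)) - C ((ν:ℂ))) * X 0 * X 1 * X 0 ^ (k+1)
            + ((k : P2) + 1) * (1 + C ((κ:ℂ)) * X 0 * X 1) * X 0 ^ (k+1)) : P2) * hC
  | succ m ih =>
      intro ν r hr
      have hr' : r * κ = -((ν + κ) + m * κ) := by push_cast at hr ⊢; linarith
      have ih' := ih (ν + κ) r hr'
      show TL κ ν r (NP κ (ν + κ) r (QPoly κ n m (ν + κ) r)) = _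
      rw [intertwine κ ν r _, ih', NP_Cmul, ← add_mul, ← map_add]
      show _ = C _ * NP κ (ν + κ) r (QPoly κ n m (ν + κ) r)
      congr 1
      push_cast
      ring


lemma chain_rep (κ : ℝ) (n : ℕ) (r : ℝ) :
    ∀ (m : ℕ) (ν : ℝ) (g : ℂ → ℂ),
      (∀ w, 0 < 1 + κ * Complex.normSq w → g w = Rf κ r (X 0 ^ n) w) →
      ∀ z, 0 < 1 + κ * Complex.normSq z →
        nablaChain κ m ν g z = Rf κ r (QPoly κ n m ν r) z := by
  intro m
  induction m with
  | zero =>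
      intro ν g hg z hz
      simpa [nablaChain, QPoly] using hg z hz
  | succ m ih =>
      intro ν g hg z hz
      have hchain := ih (ν + κ) g hg
      show nabla κ (ν + κ) (nablaChain κ m (ν + κ) g) z = _
      have he : nablaChain κ m (ν + κ) g =ᶠ[nhds z] Rf κ r (QPoly κ n m (ν + κ) r) :=
        ev_eq_of_omega hchain hz
      have h1 : nabla κ (ν + κ) (nablaChain κ m (ν + κ) g) z
          = nabla κ (ν + κ) (Rf κ r (QPoly κ n m (ν + κ) r)) z := by
        rw [nabla, nabla, wderiv_congr he, he.eq_of_nhds]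
      rw [h1, nabla_rep κ (ν + κ) r _ z hz]
      rfl

lemma twistedLap_congr {κ ν : ℝ} {f g : ℂ → ℂ} {z : ℂ} (h : f =ᶠ[nhds z] g) :
    twistedLap κ ν f z = twistedLap κ ν g z := by
  have hb : wderivBar f =ᶠ[nhds z] wderivBar g :=
    h.eventuallyEq_nhds.mono fun w hw => wderivBar_congr hw
  rw [twistedLap, twistedLap, wderiv_congr h, wderivBar_congr h, wderiv_congr hb,
    h.eq_of_nhds]

end S12

theorem stmt12 (κ : ℝ) (hκ : κ ≠ 0) (ν : ℝ) (m n : ℕ)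
    (z : ℂ) (hz : 0 < 1 + κ * Complex.normSq z) :
    twistedLap κ ν
        (nablaChain κ m ν
          (fun w => (((1 + κ * Complex.normSq w) ^ (-(ν / κ + m)) : ℝ) : ℂ) * w ^ n)) z
      = ((ν * (2 * m + 1) + m * (m + 1) * κ : ℝ) : ℂ) *
          nablaChain κ m ν
            (fun w => (((1 + κ * Complex.normSq w) ^ (-(ν / κ + m)) : ℝ) : ℂ) * w ^ n) z := by
  classical
  set r : ℝ := -(ν / κ + m) with hrdef
  set f₀ : ℂ → ℂ := fun w => (((1 + κ * Complex.normSq w) ^ r : ℝ) : ℂ) * w ^ n with hf₀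
  have hbase : ∀ w, 0 < 1 + κ * Complex.normSq w →
      f₀ w = S12.Rf κ r (MvPolynomial.X 0 ^ n) w := by
    intro w hw
    simp [S12.Rf, hf₀]
  have hchain := S12.chain_rep κ n r m ν f₀ hbase
  have hrκ : r * κ = -(ν + m * κ) := by
    field_simp [hrdef]
    rw [hrdef, neg_mul, add_mul, div_mul_cancel₀ ν hκ]; ring
  have heig := S12.eigen κ n m ν r hrκ
  have he : nablaChain κ m ν f₀ =ᶠ[nhds z] S12.Rf κ r (S12.QPoly κ n m ν r) :=
    S12.ev_eq_of_omega hchain hz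
  rw [S12.twistedLap_congr he, S12.twistedLap_rep κ ν r _ z hz, heig, he.eq_of_nhds]
  simp only [S12.Rf, S12.Ev_mul, S12.Ev_C]
  try ring
end

section
/- Assume κ ≠ 0, let b be real, and let n ≥ 0 be an integer. Then the function ψ_n(z) = (1+κ|z|²)^{−b/κ} z^n satisfies (L_κ^b ψ_n)(z) = b · ψ_n(z) for every z ∈ ℂ with 1 + κ|z|² > 0. -/
open Complex MeasureTheory Filter

lemma master (κ r : ℝ) (c : ℂ) (m : ℕ) (z : ℂ) (hz : 0 < 1 + κ * Complex.normSq z) :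
    wderiv (fun w => c * (((1 + κ * Complex.normSq w) ^ r : ℝ) : ℂ) * w ^ m) z
      = c * ((r * κ * (1 + κ * Complex.normSq z) ^ (r - 1) : ℝ) : ℂ) * (starRingEnd ℂ) z * z ^ m
        + c * (((1 + κ * Complex.normSq z) ^ r : ℝ) : ℂ) * m * z ^ (m - 1)
    ∧ wderivBar (fun w => c * (((1 + κ * Complex.normSq w) ^ r : ℝ) : ℂ) * w ^ m) z
      = c * ((r * κ * (1 + κ * Complex.normSq z) ^ (r - 1) : ℝ) : ℂ) * z * z ^ m := by
  have hne : 1 + κ * Complex.normSq z ≠ 0 := ne_of_gt hz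
  have hre : HasFDerivAt (fun w : ℂ => w.re) Complex.reCLM z := Complex.reCLM.hasFDerivAt
  have him : HasFDerivAt (fun w : ℂ => w.im) Complex.imCLM z := Complex.imCLM.hasFDerivAt
  have hns : HasFDerivAt (fun w : ℂ => Complex.normSq w)
      ((z.re • Complex.reCLM + z.re • Complex.reCLM) + (z.im • Complex.imCLM + z.im • Complex.imCLM)) z := by
    have h := (hre.mul hre).add (him.mul him)
    have : (fun w : ℂ => w.re * w.re + w.im * w.im) = fun w : ℂ => Complex.normSq w := by
      funext w; simp [Complex.normSq_apply]
    rw [← this]; exact h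
  have haff : HasDerivAt (fun t : ℝ => 1 + κ * t) κ (Complex.normSq z) := by
    simpa using ((hasDerivAt_id (Complex.normSq z)).const_mul κ).const_add 1
  have hrpow : HasDerivAt (fun t : ℝ => (1 + κ * t) ^ r)
      (κ * r * (1 + κ * Complex.normSq z) ^ (r - 1)) (Complex.normSq z) :=
    haff.rpow_const (Or.inl hne)
  have hu : HasFDerivAt (fun w : ℂ => (((1 + κ * Complex.normSq w) ^ r : ℝ) : ℂ))
      (Complex.ofRealCLM.comp ((κ * r * (1 + κ * Complex.normSq z) ^ (r - 1)) •
        ((z.re • Complex.reCLM + z.re • Complex.reCLM) + (z.im • Complex.imCLM + z.im • Complex.imCLM)))) z :=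
    Complex.ofRealCLM.hasFDerivAt.comp z (hrpow.comp_hasFDerivAt z hns)
  have hp : HasFDerivAt (fun w : ℂ => w ^ m)
      ((ContinuousLinearMap.smulRight (1 : ℂ →L[ℂ] ℂ) ((m : ℂ) * z ^ (m - 1))).restrictScalars ℝ) z :=
    ((hasDerivAt_pow m z).hasFDerivAt).restrictScalars ℝ
  have hg : HasFDerivAt (fun w : ℂ => c * (((1 + κ * Complex.normSq w) ^ r : ℝ) : ℂ) * w ^ m) _ z :=
    (hu.const_mul c).mul hp
  have hd := hg.fderiv
  have e1 := congrArg (fun L => L 1) hd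
  have eI := congrArg (fun L => L Complex.I) hd
  simp only [ContinuousLinearMap.add_apply, ContinuousLinearMap.smul_apply,
    ContinuousLinearMap.comp_apply, ContinuousLinearMap.smulRight_apply,
    ContinuousLinearMap.one_apply, ContinuousLinearMap.coe_restrictScalars',
    Complex.ofRealCLM_apply, Complex.reCLM_apply, Complex.imCLM_apply,
    Complex.I_re, Complex.I_im, Complex.one_re, Complex.one_im, smul_eq_mul] at e1 eI
  rw [wderiv, wderivBar, e1, eI]
  have hzz : (z.re : ℂ) + z.im * Complex.I = z := Complex.re_add_im z
  have hcz : (starRingEnd ℂ) z = (z.re : ℂ) - z.im * Complex.I := by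
    apply Complex.ext <;> simp
  constructor
  · rw [hcz]
    push_cast
    linear_combination (c * (((1 + κ * Complex.normSq z) ^ r : ℝ) : ℂ) * m * z^(m-1) * (-1/2)) * Complex.I_sq
  · push_cast
    linear_combination (c * (((1 + κ * Complex.normSq z) ^ r : ℝ) : ℂ) * m * z^(m-1) * (1/2)) * Complex.I_sq
      + (c * z^m * (κ:ℂ) * (r:ℂ) * (((1 + κ * Complex.normSq z) ^ (r-1) : ℝ) : ℂ)) * hzz

lemma wbar_eq (κ b : ℝ) (n : ℕ) (w : ℂ) (hw : 0 < 1 + κ * Complex.normSq w) :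
    wderivBar (fun w => (((1 + κ * Complex.normSq w) ^ (-(b / κ)) : ℝ) : ℂ) * w ^ n) w
      = ((-(b / κ) * κ : ℝ) : ℂ) *
          (((1 + κ * Complex.normSq w) ^ (-(b / κ) - 1) : ℝ) : ℂ) * w ^ (n + 1) := by
  have h := (master κ (-(b / κ)) 1 n w hw).2
  simp only [one_mul] at h
  rw [h]
  push_cast
  ring

theorem stmt13 (κ : ℝ) (hκ : κ ≠ 0) (b : ℝ) (n : ℕ)
    (z : ℂ) (hz : 0 < 1 + κ * Complex.normSq z) :
    twistedLap κ b (fun w => (((1 + κ * Complex.normSq w) ^ (-(b / κ)) : ℝ) : ℂ) * w ^ n) z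
      = (b : ℂ) * ((((1 + κ * Complex.normSq z) ^ (-(b / κ)) : ℝ) : ℂ) * z ^ n) := by
  have hκ' : (κ : ℂ) ≠ 0 := by exact_mod_cast hκ
  have hd1 := (master κ (-(b / κ)) 1 n z hz).1
  simp only [one_mul] at hd1
  have hb1 := wbar_eq κ b n z hz
  have hU : IsOpen {w : ℂ | 0 < 1 + κ * Complex.normSq w} :=
    isOpen_lt continuous_const (by continuity)
  have hfd : fderiv ℝ (wderivBar (fun w => (((1 + κ * Complex.normSq w) ^ (-(b / κ)) : ℝ) : ℂ) * w ^ n)) z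
      = fderiv ℝ (fun w => ((-(b / κ) * κ : ℝ) : ℂ) *
          (((1 + κ * Complex.normSq w) ^ (-(b / κ) - 1) : ℝ) : ℂ) * w ^ (n + 1)) z := by
    apply Filter.EventuallyEq.fderiv_eq
    filter_upwards [hU.mem_nhds hz] with w hw
    exact wbar_eq κ b n w hw
  have hdd : wderiv (wderivBar (fun w => (((1 + κ * Complex.normSq w) ^ (-(b / κ)) : ℝ) : ℂ) * w ^ n)) z
      = wderiv (fun w => ((-(b / κ) * κ : ℝ) : ℂ) *
          (((1 + κ * Complex.normSq w) ^ (-(b / κ) - 1) : ℝ) : ℂ) * w ^ (n + 1)) z := by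
    unfold wderiv; rw [hfd]
  have hG := (master κ (-(b / κ) - 1) ((-(b / κ) * κ : ℝ) : ℂ) (n + 1) z hz).1
  rw [twistedLap, hdd, hG, hd1, hb1]
  have hS : (0 : ℝ) < 1 + κ * Complex.normSq z := hz
  have hSne : ((1 + κ * Complex.normSq z : ℝ) : ℂ) ≠ 0 := by exact_mod_cast ne_of_gt hS
  have e1 : (1 + κ * Complex.normSq z) ^ (-(b / κ) - 1)
      = (1 + κ * Complex.normSq z) ^ (-(b / κ)) / (1 + κ * Complex.normSq z) := by
    rw [Real.rpow_sub hS, Real.rpow_one]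
  have e2 : (1 + κ * Complex.normSq z) ^ (-(b / κ) - 1 - 1)
      = (1 + κ * Complex.normSq z) ^ (-(b / κ)) /
          ((1 + κ * Complex.normSq z) * (1 + κ * Complex.normSq z)) := by
    rw [Real.rpow_sub hS, Real.rpow_sub hS, Real.rpow_one, div_div]
  have e3 : -(b / κ) * κ = -b := by field_simp
  have e4 : (-(b / κ) - 1) * κ = -b - κ := by field_simp
  rw [e1, e2, e3, e4]
  have hmc : (z * (starRingEnd ℂ) z : ℂ) = ((Complex.normSq z : ℝ) : ℂ) := Complex.mul_conj z
  have hSne' : (1 : ℂ) + (κ : ℂ) * (z * (starRingEnd ℂ) z) ≠ 0 := by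
    rw [hmc]; exact_mod_cast ne_of_gt hS
  have hSne'' : (1 : ℂ) + (κ : ℂ) * z * (starRingEnd ℂ) z ≠ 0 := by
    rw [mul_assoc]; exact hSne'
  cases n with
  | zero =>
    simp only [pow_zero, Nat.zero_sub, Nat.add_sub_cancel, Nat.cast_zero, Nat.cast_one]
    push_cast
    rw [← hmc]
    field_simp [hSne', hSne'']
    ring
  | succ k =>
    simp only [Nat.add_sub_cancel, Nat.succ_sub_one]
    push_cast
    rw [← hmc]
    field_simp [hSne', hSne'']
    ring
end
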